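/- (Clausen–von Staudt theorem) For every positive integer k, the rational number \(B_{2k} + \sum_{p \text{ prime},\ (p-1) \mid 2k} \frac{1}{p}\) is an integer, where the sum runs over all primes p such that p - 1 divides 2k. -/

import Mathlib

open Finset

namespace VSC

open Polynomial

/-- The `j`-th finite difference of `v ↦ v^n` at `0` (equals `j! * S(n,j)`). -/
def D (n j : ℕ) : ℤ := ∑ v ∈ Finset.range (j+1), (-1)^(j-v) * (j.choose v : ℤ) * (v:ℤ)^n

lemma neg_one_pow_sub' {R : Type*} [Ring R] {v j : ℕ} (h : v ≤ j) :
    ((-1:R))^(j-v) = (-1)^j * (-1)^v := by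
  conv_rhs => rw [← Nat.sub_add_cancel h, pow_add]
  rw [mul_assoc, ← pow_add, ← two_mul, pow_mul, neg_one_sq, one_pow, mul_one]

lemma D_zero' (j : ℕ) : D 0 j = if j = 0 then 1 else 0 := by
  rcases j with _ | j
  · simp [D]
  · simp only [D, pow_zero, mul_one, Nat.succ_ne_zero, if_false]
    have h : ∀ v ∈ range (j+2), (-1:ℤ)^(j+1-v) * ((j+1).choose v : ℤ)
        = (-1)^(j+1) * ((-1)^v * ((j+1).choose v)) := by
      intro v hv
      rw [neg_one_pow_sub' (Nat.lt_succ_iff.mp (mem_range.mp hv))]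
      ring
    rw [sum_congr rfl h, ← mul_sum, Int.alternating_sum_range_choose_of_ne (Nat.succ_ne_zero j),
      mul_zero]
lemma D_succ_succ (n j : ℕ) : D (n+1) (j+1) = (j+1) * (D n (j+1) + D n j) := by
  set S := ∑ u ∈ range (j+1), (-1:ℤ)^(j-u) * (j.choose (u+1) : ℤ) * ((u:ℤ)+1)^n with hSdef
  have h1 : D n (j+1)
      = (∑ u ∈ range (j+1), (-1:ℤ)^(j-u) * ((j+1).choose (u+1) : ℤ) * ((u:ℤ)+1)^n)
        + (-1)^(j+1) * (0:ℤ)^n := by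
    rw [D, sum_range_succ']
    congr 1
    · refine sum_congr rfl fun u hu => ?_
      rw [Nat.succ_sub_succ]
      push_cast
      ring
    · norm_num
  have h2 : ∀ u ∈ range (j+1),
      (-1:ℤ)^(j-u) * ((j+1).choose (u+1) : ℤ) * ((u:ℤ)+1)^n
      = (-1:ℤ)^(j-u) * (j.choose u : ℤ) * ((u:ℤ)+1)^n
        + (-1:ℤ)^(j-u) * (j.choose (u+1) : ℤ) * ((u:ℤ)+1)^n := by
    intro u hu
    rw [Nat.choose_succ_succ]
    push_cast
    ring
  have hS : S = ∑ u ∈ range j, (-1:ℤ)^(j-u) * (j.choose (u+1) : ℤ) * ((u:ℤ)+1)^n := by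
    rw [hSdef, sum_range_succ]
    simp
  have hD : D n j
      = (∑ u ∈ range j, (-1:ℤ)^(j-(u+1)) * (j.choose (u+1) : ℤ) * ((u:ℤ)+1)^n)
        + (-1:ℤ)^j * (0:ℤ)^n := by
    rw [D, sum_range_succ']
    congr 1
    norm_num
  have h3 : S + (-1)^(j+1) * (0:ℤ)^n = - D n j := by
    rw [hS, hD, neg_add]
    congr 1
    · rw [← Finset.sum_neg_distrib]
      refine sum_congr rfl fun u hu => ?_
      have hu' : u < j := mem_range.mp hu
      have he : j - u = (j - (u+1)) + 1 := by omega
      rw [he, pow_succ]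
      ring
    · rw [pow_succ]
      ring
  have hE : D n (j+1) + D n j
      = ∑ u ∈ range (j+1), (-1:ℤ)^(j-u) * (j.choose u : ℤ) * ((u:ℤ)+1)^n := by
    rw [h1, sum_congr rfl h2, sum_add_distrib]
    have : (∑ u ∈ range (j+1), (-1:ℤ)^(j-u) * (j.choose u : ℤ) * ((u:ℤ)+1)^n) + S
        + (-1)^(j+1) * (0:ℤ)^n + D n j
        = (∑ u ∈ range (j+1), (-1:ℤ)^(j-u) * (j.choose u : ℤ) * ((u:ℤ)+1)^n)
          + ((S + (-1)^(j+1) * (0:ℤ)^n) + D n j) := by ring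
    rw [this, h3]
    ring
  have h4 : D (n+1) (j+1)
      = ∑ u ∈ range (j+1), (-1:ℤ)^(j-u) * (((j+1) : ℤ) * (j.choose u : ℤ)) * ((u:ℤ)+1)^n := by
    rw [D, sum_range_succ']
    have hz : ((-1:ℤ))^(j+1-0) * (((j+1).choose 0 : ℕ) : ℤ) * ((0:ℕ):ℤ)^(n+1) = 0 := by
      norm_num
    rw [hz, add_zero]
    refine sum_congr rfl fun u hu => ?_
    have hc : (((j+1) : ℕ) : ℤ) * (j.choose u : ℤ) = ((j+1).choose (u+1) : ℤ) * ((u:ℤ)+1) := by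
      exact_mod_cast congrArg (Nat.cast : ℕ → ℤ) (Nat.add_one_mul_choose_eq j u)
    rw [Nat.succ_sub_succ]
    push_cast at hc ⊢
    rw [hc]
    ring
  rw [h4, hE, mul_sum]
  refine sum_congr rfl fun u hu => ?_
  push_cast
  ring

lemma factorial_dvd_D (n j : ℕ) : (j.factorial : ℤ) ∣ D n j := by
  induction n generalizing j with
  | zero =>
    rw [D_zero']
    rcases j with _ | j <;> simp
  | succ n ih =>
    rcases j with _ | j
    · simp
    · rw [D_succ_succ, Nat.factorial_succ]
      push_cast
      have h1 : (j.factorial : ℤ) ∣ D n (j+1) := by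
        refine dvd_trans ?_ (ih (j+1))
        exact_mod_cast Nat.factorial_dvd_factorial (Nat.le_succ j)
      exact mul_dvd_mul_left _ (dvd_add h1 (ih j))

lemma D_eq_zero_of_lt {n j : ℕ} (h : n < j) : D n j = 0 := by
  induction n generalizing j with
  | zero => rw [D_zero', if_neg (by omega)]
  | succ n ih =>
    rcases j with _ | j
    · omega
    · rw [D_succ_succ, ih (by omega), ih (by omega)]
      ring

lemma key_alternating (m v : ℕ) (hv : v ≤ m) :
    ∑ j ∈ range (m+1), (-1:ℤ)^(j-v) * (m.choose j : ℤ) * (j.choose v : ℤ)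
      = if v = m then 1 else 0 := by
  have hsub : Finset.Ico v (m+1) ⊆ range (m+1) := by
    intro x hx; rw [mem_range]; exact (Finset.mem_Ico.mp hx).2
  rw [← Finset.sum_subset hsub (fun x hx hx' => by
    have : x < v := by
      rw [mem_range] at hx; rw [Finset.mem_Ico] at hx'; omega
    rw [Nat.choose_eq_zero_of_lt this]; push_cast; ring)]
  rw [Finset.sum_Ico_eq_sum_range]
  have hstep : ∀ i ∈ range (m+1-v),
      (-1:ℤ)^(v+i-v) * (m.choose (v+i) : ℤ) * ((v+i).choose v : ℤ)
      = (m.choose v : ℤ) * ((-1:ℤ)^i * ((m-v).choose i : ℤ)) := by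
    intro i hi
    have hi' : v + i ≤ m := by rw [mem_range] at hi; omega
    have hc : m.choose (v+i) * (v+i).choose v = m.choose v * (m-v).choose i := by
      have := Nat.choose_mul (n := m) (Nat.le_add_right v i)
      simpa [Nat.add_sub_cancel_left] using this
    have he : v + i - v = i := Nat.add_sub_cancel_left v i
    rw [he]
    have := congrArg (Nat.cast : ℕ → ℤ) hc
    push_cast at this
    rw [mul_assoc, this]
    ring
  rw [sum_congr rfl hstep, ← mul_sum]
  have hmv : m + 1 - v = (m - v) + 1 := by omega
  rw [hmv, Int.alternating_sum_range_choose]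
  rcases eq_or_ne v m with rfl | hne
  · simp
  · have : ¬ (m - v = 0) := by omega
    rw [if_neg this, if_neg hne, mul_zero]

lemma pow_eq_sum_choose_D (n m : ℕ) :
    ((m:ℤ))^n = ∑ j ∈ range (m+1), (m.choose j : ℤ) * D n j := by
  have hD : ∀ j ∈ range (m+1), (m.choose j : ℤ) * D n j
      = ∑ v ∈ range (m+1), (m.choose j : ℤ) * ((-1:ℤ)^(j-v) * (j.choose v : ℤ) * (v:ℤ)^n) := by
    intro j hj
    rw [mem_range] at hj
    rw [D, ← Finset.sum_subset (Finset.range_subset_range.mpr (by omega : j+1 ≤ m+1))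
      (fun x hx hx' => by
        have : j < x := by rw [mem_range] at hx hx'; omega
        rw [Nat.choose_eq_zero_of_lt this]; push_cast; ring), mul_sum]
  rw [sum_congr rfl hD, sum_comm]
  have hinner : ∀ v ∈ range (m+1),
      (∑ j ∈ range (m+1), (m.choose j : ℤ) * ((-1:ℤ)^(j-v) * (j.choose v : ℤ) * (v:ℤ)^n))
      = (if v = m then 1 else 0) * (v:ℤ)^n := by
    intro v hv
    rw [mem_range] at hv
    rw [← key_alternating m v (by omega), sum_mul]
    refine sum_congr rfl fun j hj => by ring
  rw [sum_congr rfl hinner]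
  have hfin : ∀ v ∈ range (m+1), (if v = m then (1:ℤ) else 0) * (v:ℤ)^n
      = if v = m then ((m:ℤ)^n) else 0 := by
    intro v _
    split <;> simp_all
  rw [sum_congr rfl hfin, Finset.sum_ite_eq' (range (m+1)) m (fun _ => (m:ℤ)^n),
    if_pos (self_mem_range_succ m)]

lemma newton (n m : ℕ) :
    ∑ i ∈ range m, (i:ℤ)^n = ∑ j ∈ range m, (m.choose (j+1) : ℤ) * D n j := by
  induction m with
  | zero => simp
  | succ m ih =>
    rw [sum_range_succ, ih]
    have hP : ∀ j ∈ range (m+1), ((m+1).choose (j+1) : ℤ) * D n j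
        = (m.choose j : ℤ) * D n j + (m.choose (j+1) : ℤ) * D n j := by
      intro j _
      rw [Nat.choose_succ_succ]
      push_cast
      ring
    rw [sum_congr rfl hP, sum_add_distrib, ← pow_eq_sum_choose_D]
    rw [sum_range_succ _ m, Nat.choose_succ_self, Nat.cast_zero, zero_mul, add_zero]
    ring

lemma newton' (n m : ℕ) :
    ∑ i ∈ range m, (i:ℤ)^n = ∑ j ∈ range (n+1), (m.choose (j+1) : ℤ) * D n j := by
  rw [newton]
  rcases le_total m (n+1) with h | h
  · exact Finset.sum_subset (Finset.range_subset_range.mpr h) (fun x hx hx' => by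
      have : m < x + 1 := by rw [mem_range] at hx hx'; omega
      rw [Nat.choose_eq_zero_of_lt this, Nat.cast_zero, zero_mul])
  · exact (Finset.sum_subset (Finset.range_subset_range.mpr h) (fun x hx hx' => by
      have : n < x := by rw [mem_range] at hx hx'; omega
      rw [D_eq_zero_of_lt this, mul_zero])).symm

lemma desc_coeff_one (j : ℕ) :
    (descPochhammer ℚ (j+1)).coeff 1 = (-1)^j * (j.factorial : ℚ) := by
  induction j with
  | zero => simp [descPochhammer_one]
  | succ j ih =>
    rw [descPochhammer_succ_right, mul_sub]
    have hX : (descPochhammer ℚ (j+1) * X).coeff 1 = (descPochhammer ℚ (j+1)).coeff 0 := by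
      rw [Polynomial.coeff_mul_X]
    have h0 : (descPochhammer ℚ (j+1)).coeff 0 = 0 := by
      rw [Polynomial.coeff_zero_eq_eval_zero, descPochhammer_eval_zero]
      simp
    have hC : ((j+1 : ℕ) : ℚ[X]) = Polynomial.C ((j+1 : ℕ) : ℚ) := by
      push_cast
      simp
    rw [Polynomial.coeff_sub, hX, h0, hC, Polynomial.coeff_mul_C, ih, Nat.factorial_succ]
    push_cast
    ring

lemma bernoulli_eq (n : ℕ) (hn : 1 ≤ n) :
    _root_.bernoulli n = ∑ j ∈ range (n+1), (-1:ℚ)^j * (D n j : ℚ) / (j+1) := by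
  set P : ℚ[X] := ∑ i ∈ range (n+1),
    Polynomial.C (_root_.bernoulli i * ((n+1).choose i) / (n+1)) * Polynomial.X^(n+1-i) with hP
  set Q : ℚ[X] := ∑ j ∈ range (n+1),
    Polynomial.C ((D n j : ℚ) / ((j+1).factorial : ℚ)) * descPochhammer ℚ (j+1) with hQ
  have heval : ∀ m : ℕ, P.eval (m:ℚ) = Q.eval (m:ℚ) := by
    intro m
    have hPe : P.eval (m:ℚ) = ∑ k ∈ range m, (k:ℚ)^n := by
      rw [hP, Polynomial.eval_finset_sum, sum_range_pow m n]
      refine sum_congr rfl fun i hi => ?_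
      rw [Polynomial.eval_mul, Polynomial.eval_C, Polynomial.eval_pow, Polynomial.eval_X]
      ring
    have hQe : Q.eval (m:ℚ) = ∑ j ∈ range (n+1), (m.choose (j+1) : ℚ) * (D n j : ℚ) := by
      rw [hQ, Polynomial.eval_finset_sum]
      refine sum_congr rfl fun j hj => ?_
      rw [Polynomial.eval_mul, Polynomial.eval_C, descPochhammer_eval_eq_descFactorial,
        Nat.descFactorial_eq_factorial_mul_choose]
      have hfac : ((j+1).factorial : ℚ) ≠ 0 := by
        exact_mod_cast (Nat.factorial_pos (j+1)).ne'
      field_simp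
      push_cast
      ring
    rw [hPe, hQe]
    have := congrArg (Int.cast : ℤ → ℚ) (newton' n m)
    push_cast at this
    exact this
  have hPQ : P = Q := by
    have hroot : (P - Q) = 0 := by
      apply Polynomial.eq_zero_of_infinite_isRoot
      refine (Set.infinite_range_of_injective (Nat.cast_injective : Function.Injective (Nat.cast : ℕ → ℚ))).mono ?_
      rintro x ⟨m, rfl⟩
      simp [Polynomial.IsRoot, heval m]
    have := sub_eq_zero.mp hroot
    exact this
  have hcoefP : P.coeff 1 = _root_.bernoulli n := by
    rw [hP, Polynomial.finset_sum_coeff]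
    rw [Finset.sum_eq_single n]
    · rw [Polynomial.coeff_C_mul, Polynomial.coeff_X_pow]
      have h1 : n + 1 - n = 1 := by omega
      rw [h1, if_pos rfl, Nat.choose_succ_self_right]
      have : ((n:ℚ)+1) ≠ 0 := by positivity
      push_cast
      field_simp
    · intro i hi hne
      rw [Polynomial.coeff_C_mul, Polynomial.coeff_X_pow]
      have : ¬ (1 = n + 1 - i) := by
        rw [mem_range] at hi; omega
      rw [if_neg this, mul_zero]
    · intro h
      exact absurd (self_mem_range_succ n) h
  have hcoefQ : Q.coeff 1 = ∑ j ∈ range (n+1), (-1:ℚ)^j * (D n j : ℚ) / (j+1) := by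
    rw [hQ, Polynomial.finset_sum_coeff]
    refine sum_congr rfl fun j hj => ?_
    rw [Polynomial.coeff_C_mul, desc_coeff_one]
    have hfac : ((j:ℚ)+1) ≠ 0 := by positivity
    have hfac2 : (j.factorial : ℚ) ≠ 0 := by
      exact_mod_cast (Nat.factorial_pos j).ne'
    rw [Nat.factorial_succ]
    push_cast
    field_simp
  rw [← hcoefP, hPQ, hcoefQ]

lemma mul_dvd_factorial {a b N : ℕ} (ha : 0 < a) (hab : a < b) (hbN : b ≤ N) :
    a * b ∣ N.factorial := by
  obtain ⟨c, hc⟩ := Nat.dvd_factorial ha (show a ≤ b - 1 by omega)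
  have hb : b.factorial = (a * b) * c := by
    rw [← Nat.mul_factorial_pred (by omega : b ≠ 0), hc]
    ring
  exact dvd_trans ⟨c, hb⟩ (Nat.factorial_dvd_factorial hbN)

lemma composite_dvd {m : ℕ} (h2 : 2 ≤ m) (hnp : ¬ m.Prime) (h4 : m ≠ 4) :
    m ∣ (m-1).factorial := by
  obtain ⟨a, hadvd, ha2, ham⟩ := Nat.exists_dvd_of_not_prime2 h2 hnp
  obtain ⟨b, hb⟩ := hadvd
  have hb2 : 2 ≤ b := by
    rcases Nat.lt_or_ge b 2 with h | h
    · interval_cases b <;> omega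
    · exact h
  subst hb
  rcases lt_trichotomy a b with h | rfl | h
  · have h2b : 2 * b ≤ a * b := Nat.mul_le_mul_right b ha2
    exact mul_dvd_factorial (by omega) h (by omega)
  · have ha3 : 3 ≤ a := by
      rcases Nat.lt_or_ge a 3 with h | h
      · interval_cases a <;> omega
      · exact h
    have haa : 2 * a + 1 ≤ a * a := by nlinarith
    have hd : a * (2 * a) ∣ (a * a - 1).factorial :=
      mul_dvd_factorial (by omega) (by omega) (by omega)
    refine dvd_trans ⟨2, by ring⟩ hd
  · have h2a : 2 * a ≤ b * a := Nat.mul_le_mul_right a hb2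
    have hba : b * a = a * b := Nat.mul_comm b a
    rw [← hba]
    exact mul_dvd_factorial (by omega) h (by omega)

lemma choose_pred_cast (p : ℕ) (hp : p.Prime) (v : ℕ) (hv : v ≤ p - 1) :
    (((p-1).choose v : ℕ) : ZMod p) = (-1)^v := by
  induction v with
  | zero => simp
  | succ v ih =>
    have hv' : v ≤ p - 1 := by omega
    have hvp : v + 1 < p := by have := hp.two_le; omega
    have hdvd : p ∣ p.choose (v+1) := hp.dvd_choose_self (Nat.succ_ne_zero v) hvp
    have hpascal : p.choose (v+1) = (p-1).choose v + (p-1).choose (v+1) := by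
      conv_lhs => rw [← Nat.succ_pred_eq_of_pos hp.pos]
      rw [Nat.choose_succ_succ]
      rfl
    have hz : ((p.choose (v+1) : ℕ) : ZMod p) = 0 :=
      (ZMod.natCast_eq_zero_iff _ _).mpr hdvd
    rw [hpascal] at hz
    push_cast at hz
    rw [ih hv'] at hz
    have : (((p-1).choose (v+1) : ℕ) : ZMod p) = -(-1)^v := by linear_combination hz
    rw [this, pow_succ]
    ring

lemma sum_pow_field {K : Type*} [Field K] [Fintype K] [DecidableEq K] {i : ℕ} (hi : i ≠ 0) :
    ∑ x : K, x ^ i = if Fintype.card K - 1 ∣ i then -1 else 0 := by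
  let φ : Kˣ ↪ K := ⟨fun x ↦ x, fun _ _ h => Units.ext h⟩
  have hmap : univ.map φ = univ \ {0} := by
    ext x
    simp only [mem_map, mem_univ, Function.Embedding.coeFn_mk, true_and, mem_sdiff,
      mem_singleton, φ]
    exact isUnit_iff_ne_zero
  calc
    ∑ x : K, x ^ i = ∑ x ∈ univ \ {(0 : K)}, x ^ i := by
      rw [← sum_sdiff ({0} : Finset K).subset_univ, sum_singleton, zero_pow hi, add_zero]
    _ = ∑ x : Kˣ, ((x:K) ^ i : K) := by simp [φ, ← hmap, univ.sum_map φ]; rfl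
    _ = _ := FiniteField.sum_pow_units K i

lemma sum_range_pow_zmod (p n : ℕ) [NeZero p] :
    ∑ v ∈ range p, ((v:ℕ) : ZMod p)^n = ∑ x : ZMod p, x^n := by
  apply Finset.sum_nbij' (i := fun v => ((v:ℕ) : ZMod p)) (j := fun x => x.val)
  · intro a ha; exact mem_univ _
  · intro x hx; rw [mem_range]; exact ZMod.val_lt x
  · intro a ha; rw [mem_range] at ha; exact ZMod.val_cast_of_lt ha
  · intro x hx; exact ZMod.natCast_rightInverse x
  · intro a ha; rfl

lemma D_prime_cong (n p : ℕ) (hp : p.Prime) (hn : 1 ≤ n) :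
    ((((-1:ℤ)^(p-1) * D n (p-1)) : ℤ) : ZMod p) = if (p-1) ∣ n then -1 else 0 := by
  haveI : Fact p.Prime := ⟨hp⟩
  have h1 : ((D n (p-1) : ℤ) : ZMod p)
      = (-1)^(p-1) * ∑ v ∈ range p, ((v:ℕ) : ZMod p)^n := by
    rw [D]
    push_cast
    have hpp : p - 1 + 1 = p := by have := hp.pos; omega
    rw [hpp, mul_sum]
    refine sum_congr rfl fun v hv => ?_
    have hv' : v ≤ p - 1 := by
      rw [mem_range] at hv; omega
    have hkey : (-1:ZMod p)^(p-1-v) * (((p-1).choose v : ℕ) : ZMod p) = (-1)^(p-1) := by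
      rw [choose_pred_cast p hp v hv', neg_one_pow_sub' hv', mul_assoc, ← pow_add, ← two_mul,
        pow_mul, neg_one_sq, one_pow, mul_one]
    rw [← hkey]
  rw [Int.cast_mul, h1, sum_range_pow_zmod p n, sum_pow_field (by omega : n ≠ 0), ZMod.card]
  push_cast
  rw [← mul_assoc, ← pow_add, ← two_mul, pow_mul, neg_one_sq, one_pow, one_mul]

lemma four_dvd_D (k : ℕ) (hk : 0 < k) : (4:ℤ) ∣ D (2*k) 3 := by
  have hn1 : 2*k ≠ 0 := by omega
  have hD : D (2*k) 3 = 3 - 3*2^(2*k) + 3^(2*k) := by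
    simp [D, Finset.sum_range_succ, zero_pow hn1]
    push_cast
    ring
  rw [hD]
  have hz : ((3 - 3*2^(2*k) + 3^(2*k) : ℤ) : ZMod 4) = 0 := by
    push_cast
    rw [pow_mul, pow_mul]
    have h2 : ((2:ZMod 4))^2 = 0 := by decide
    have h3 : ((3:ZMod 4))^2 = 1 := by decide
    rw [h2, h3, zero_pow hk.ne', one_pow]
    decide
  exact_mod_cast (ZMod.intCast_zmod_eq_zero_iff_dvd _ 4).mp hz

lemma exists_int_sum {s : Finset ℕ} {f : ℕ → ℚ} (h : ∀ i ∈ s, ∃ z : ℤ, f i = z) :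
    ∃ z : ℤ, ∑ i ∈ s, f i = z := by
  classical
  induction s using Finset.induction with
  | empty => exact ⟨0, by simp⟩
  | insert _ _ hx ih =>
    obtain ⟨z1, hz1⟩ := h _ (mem_insert_self _ _)
    obtain ⟨z2, hz2⟩ := ih fun i hi => h i (mem_insert_of_mem hi)
    exact ⟨z1 + z2, by rw [sum_insert hx, hz1, hz2]; push_cast; ring⟩

end VSC

open VSC in
theorem clausen_von_staudt (k : ℕ) (hk : 0 < k) :
    ∃ z : ℤ,
      bernoulli (2 * k) +
          ∑ p ∈ (Finset.range (2 * k + 2)).filter (fun p => p.Prime ∧ (p - 1) ∣ 2 * k),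
            (1 : ℚ) / p =
        (z : ℚ) := by
  have hn1 : 1 ≤ 2 * k := by omega
  have hfilter : ∑ p ∈ (Finset.range (2 * k + 2)).filter (fun p => p.Prime ∧ (p - 1) ∣ 2 * k),
        (1 : ℚ) / p
      = ∑ j ∈ range (2*k+1), (if (j+1).Prime ∧ j ∣ 2*k then (1:ℚ)/(j+1) else 0) := by
    rw [sum_filter, sum_range_succ']
    have h0 : (if Nat.Prime 0 ∧ (0 - 1) ∣ 2*k then (1:ℚ)/((0:ℕ):ℚ) else 0) = 0 := by
      rw [if_neg]
      rintro ⟨h, -⟩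
      exact Nat.not_prime_zero h
    rw [h0, add_zero]
    refine sum_congr rfl fun j hj => ?_
    simp only [Nat.add_sub_cancel]
    push_cast
    rfl
  rw [bernoulli_eq (2*k) hn1, hfilter, ← sum_add_distrib]
  apply exists_int_sum
  intro j hj
  rw [mem_range] at hj
  by_cases hp : (j+1).Prime
  · have hc := D_prime_cong (2*k) (j+1) hp hn1
    simp only [Nat.add_sub_cancel] at hc
    by_cases hd : j ∣ 2*k
    · rw [if_pos hd] at hc
      rw [if_pos (show (j+1).Prime ∧ j ∣ 2*k from ⟨hp, hd⟩)]
      have h0 : (((-1:ℤ)^j * D (2*k) j + 1 : ℤ) : ZMod (j+1)) = 0 := by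
        push_cast
        push_cast at hc
        rw [hc]
        ring
      have hdvd : ((j+1 : ℕ) : ℤ) ∣ ((-1)^j * D (2*k) j + 1) := by
        exact_mod_cast (ZMod.intCast_zmod_eq_zero_iff_dvd _ _).mp h0
      obtain ⟨t, ht⟩ := hdvd
      refine ⟨t, ?_⟩
      have hne : ((j:ℚ)+1) ≠ 0 := by positivity
      have htQ := congrArg (Int.cast : ℤ → ℚ) ht
      push_cast at htQ
      field_simp
      linear_combination htQ
    · rw [if_neg hd] at hc
      rw [if_neg (fun h : (j+1).Prime ∧ j ∣ 2*k => hd h.2)]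
      have h0 : (((-1:ℤ)^j * D (2*k) j : ℤ) : ZMod (j+1)) = 0 := by
        push_cast
        push_cast at hc
        rw [hc]
      have hdvd : ((j+1 : ℕ) : ℤ) ∣ ((-1)^j * D (2*k) j) := by
        exact_mod_cast (ZMod.intCast_zmod_eq_zero_iff_dvd _ _).mp h0
      obtain ⟨t, ht⟩ := hdvd
      refine ⟨t, ?_⟩
      have hne : ((j:ℚ)+1) ≠ 0 := by positivity
      have htQ := congrArg (Int.cast : ℤ → ℚ) ht
      push_cast at htQ
      rw [add_zero]
      field_simp
      linear_combination htQ
  · rw [if_neg (fun h => hp h.1), add_zero]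
    have hdvd : ((j+1 : ℕ) : ℤ) ∣ D (2*k) j := by
      rcases eq_or_ne j 0 with rfl | hj0
      · simp
      rcases eq_or_ne j 3 with rfl | hj3
      · exact_mod_cast four_dvd_D k hk
      · have h2 : 2 ≤ j + 1 := by omega
        have h4 : j + 1 ≠ 4 := by omega
        have hcomp := composite_dvd h2 hp h4
        simp only [Nat.add_sub_cancel] at hcomp
        have h5 : ((j+1 : ℕ) : ℤ) ∣ (j.factorial : ℤ) := by exact_mod_cast hcomp
        exact h5.trans (factorial_dvd_D (2*k) j)
    obtain ⟨t, ht⟩ := hdvd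
    refine ⟨(-1)^j * t, ?_⟩
    have hne : ((j:ℚ)+1) ≠ 0 := by positivity
    have htQ := congrArg (Int.cast : ℤ → ℚ) ht
    push_cast at htQ
    field_simp
    push_cast
    linear_combination ((-1:ℚ))^j * htQ
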